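/- Let g_1(t) = ((t+eps)^{gamma_1} - eps^{gamma_1}) / ((1+eps)^{gamma_1} - eps^{gamma_1}) and g_2(t) defined analogously with exponent gamma_2, where eps > 0 and 0 < gamma_1 < gamma_2. Then g_1(t) > g_2(t) for all t in (0,1). -/

import Mathlib

open Real

/-- Secant slopes of the strictly concave map `x ↦ x^θ` from the point `1` are
strictly antitone: for `1 < y₁ < y₂` and `θ ∈ (0,1)` we have
`(y₂^θ - 1)/(y₂ - 1) < (y₁^θ - 1)/(y₁ - 1)`. -/
lemma secant_rpow_lt {θ y1 y2 : ℝ} (hθ0 : 0 < θ) (hθ1 : θ < 1)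
    (hy1 : 1 < y1) (hy12 : y1 < y2) :
    (y2 ^ θ - 1) / (y2 - 1) < (y1 ^ θ - 1) / (y1 - 1) := by
  have h := (Real.strictConcaveOn_rpow hθ0 hθ1).secant_strict_mono
    (a := 1) (x := y1) (y := y2)
    (Set.mem_Ici.2 zero_le_one) (Set.mem_Ici.2 (by linarith)) (Set.mem_Ici.2 (by linarith))
    (by intro h; linarith) (by intro h; linarith) hy12
  simpa using h

/-- Schedule comparison: the smoothed power schedule with the smaller exponent lies
strictly above the one with the larger exponent on `(0,1)`. -/
theorem smoothed_power_schedule_compare (eps gamma1 gamma2 : ℝ)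
    (heps : 0 < eps) (h1 : 0 < gamma1) (h12 : gamma1 < gamma2)
    (g1 g2 : ℝ → ℝ)
    (hg1 : ∀ t, g1 t = ((t + eps) ^ gamma1 - eps ^ gamma1) /
      ((1 + eps) ^ gamma1 - eps ^ gamma1))
    (hg2 : ∀ t, g2 t = ((t + eps) ^ gamma2 - eps ^ gamma2) /
      ((1 + eps) ^ gamma2 - eps ^ gamma2)) :
    ∀ t ∈ Set.Ioo (0 : ℝ) 1, g2 t < g1 t := by
  rintro t ⟨ht0, ht1⟩
  have h2 : 0 < gamma2 := h1.trans h12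
  set a : ℝ := t + eps with ha
  set b : ℝ := 1 + eps with hb
  have hca : eps < a := by simp only [ha]; linarith
  have hab : a < b := by simp only [ha, hb]; linarith
  have ha0 : 0 < a := heps.trans hca
  have hb0 : 0 < b := ha0.trans hab
  set A : ℝ := a / eps with hA
  set B : ℝ := b / eps with hB
  have hA1 : 1 < A := (one_lt_div heps).2 hca
  have hAB : A < B := div_lt_div_of_pos_right hab heps
  have hB1 : 1 < B := hA1.trans hAB
  set θ : ℝ := Real.log A / Real.log B with hθ
  have hlogA : 0 < Real.log A := Real.log_pos hA1
  have hlogB : 0 < Real.log B := Real.log_pos hB1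
  have hθ0 : 0 < θ := div_pos hlogA hlogB
  have hθ1 : θ < 1 := (div_lt_one hlogB).2 (Real.log_lt_log (by linarith) hAB)
  -- key identity : (B ^ γ) ^ θ = A ^ γ
  have hkey : ∀ γ : ℝ, (B ^ γ) ^ θ = A ^ γ := by
    intro γ
    rw [← Real.rpow_mul (by positivity : (0:ℝ) ≤ B), Real.rpow_def_of_pos (by positivity),
      Real.rpow_def_of_pos (by linarith : (0:ℝ) < A)]
    congr 1
    field_simp [hθ]
    rw [hθ, mul_div_assoc', div_eq_iff hlogB.ne']; ring
  -- the main inequality in terms of A, B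
  have hy1 : (1:ℝ) < B ^ gamma1 := Real.one_lt_rpow_iff_of_pos (by positivity) |>.2
    (Or.inl ⟨hB1, h1⟩)
  have hy12 : B ^ gamma1 < B ^ gamma2 := (Real.rpow_lt_rpow_left_iff hB1).2 h12
  have hmain : (A ^ gamma2 - 1) / (B ^ gamma2 - 1) < (A ^ gamma1 - 1) / (B ^ gamma1 - 1) := by
    have := secant_rpow_lt hθ0 hθ1 hy1 hy12
    rwa [hkey, hkey] at this
  -- rewrite g1, g2 in terms of A, B
  have hrw : ∀ γ : ℝ, 0 < γ → (a ^ γ - eps ^ γ) / (b ^ γ - eps ^ γ) = (A ^ γ - 1) / (B ^ γ - 1) := by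
    intro γ hγ
    have hbe : eps ^ γ < b ^ γ := Real.rpow_lt_rpow heps.le (show eps < b by rw [hb]; linarith) hγ
    have he : (0:ℝ) < eps ^ γ := Real.rpow_pos_of_pos heps γ
    have e1 : A ^ γ - 1 = (a ^ γ - eps ^ γ) / eps ^ γ := by
      rw [hA, Real.div_rpow ha0.le heps.le]; field_simp
    have e2 : B ^ γ - 1 = (b ^ γ - eps ^ γ) / eps ^ γ := by
      rw [hB, Real.div_rpow hb0.le heps.le]; field_simp
    rw [e1, e2]
    rw [div_div_div_eq, mul_comm (eps ^ γ) (b ^ γ - eps ^ γ),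
      mul_div_mul_right _ _ he.ne']
  rw [hg1, hg2, hrw _ h1, hrw _ h2]
  exact hmain
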